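/- Let α be a badly approximable irrational with convergent denominators q_k. If there exist δ > 0 and 0 < c < 1 such that for infinitely many k, sup_{ε ∈ (-δ,δ)} P_{q_k}(α, ε) < c, then liminf_{N→∞} P_N(α) = 0, where P_{q_k}(α,ε) := ∏_{r=1}^{q_k} 2|sin(π(rα + (-1)^k ε/q_k))|. -/

import Mathlib

open Filter Real

/-- The Sudler product `P_N(α) = ∏_{r=1}^N 2 |sin (π r α)|`. -/
noncomputable def sudler (α : ℝ) (N : ℕ) : ℝ :=
  ∏ r ∈ Finset.Icc 1 N, 2 * |Real.sin (Real.pi * r * α)|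

/-- The Gauss map `x ↦ {1/x}`. -/
noncomputable def gaussMap (x : ℝ) : ℝ := Int.fract x⁻¹

/-- The `n`-th partial quotient `a_n` (for `n ≥ 1`) of the continued fraction
expansion of `α`, obtained by iterating the Gauss map. -/
noncomputable def partQuot (α : ℝ) (n : ℕ) : ℕ :=
  (⌊(gaussMap^[n - 1] (Int.fract α))⁻¹⌋).toNat

/-- The denominators `q_k` of the continued fraction convergents of `α`:
`q_0 = 1`, `q_1 = a_1`, `q_{k+2} = a_{k+2} q_{k+1} + q_k`. -/
noncomputable def qden (α : ℝ) : ℕ → ℕ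
  | 0 => 1
  | 1 => partQuot α 1
  | (n + 2) => partQuot α (n + 2) * qden α (n + 1) + qden α n

/-- The numerators `p_k` of the continued fraction convergents of `α`. -/
noncomputable def pnum (α : ℝ) : ℕ → ℤ
  | 0 => ⌊α⌋
  | 1 => partQuot α 1 * ⌊α⌋ + 1
  | (n + 2) => partQuot α (n + 2) * pnum α (n + 1) + pnum α n

/-- Distance from `x` to the nearest integer, `‖x‖`. -/
noncomputable def nearestDist (x : ℝ) : ℝ := |x - round x|

/-- The perturbed Sudler product
`P_{q_k}(α, ε) = ∏_{r=1}^{q_k} 2 |sin (π (r α + (-1)^k ε / q_k))|`. -/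
noncomputable def sudlerPert (α : ℝ) (k : ℕ) (ε : ℝ) : ℝ :=
  ∏ r ∈ Finset.Icc 1 (qden α k),
    2 * |Real.sin (Real.pi * (r * α + (-1 : ℝ) ^ k * ε / (qden α k)))|

/-! ### Auxiliary lemmas on the Gauss map iterates -/

/-- The iterates of the Gauss map starting from `{α}`. -/
noncomputable def gx (α : ℝ) (n : ℕ) : ℝ := gaussMap^[n] (Int.fract α)

lemma gx_zero (α : ℝ) : gx α 0 = Int.fract α := rfl

lemma gx_succ (α : ℝ) (n : ℕ) : gx α (n+1) = gaussMap (gx α n) := by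
  simp [gx, Function.iterate_succ_apply']

lemma irr_fract {x : ℝ} (hx : Irrational x) : Irrational (Int.fract x) := by
  unfold Int.fract
  exact hx.sub_intCast _

lemma gx_irr {α : ℝ} (hα : Irrational α) : ∀ n, Irrational (gx α n) := by
  intro n
  induction n with
  | zero => exact irr_fract hα
  | succ n ih =>
      rw [gx_succ]
      exact irr_fract ih.inv

lemma gx_mem {α : ℝ} (hα : Irrational α) (n : ℕ) : gx α n ∈ Set.Ioo (0:ℝ) 1 := by
  have h1 : Irrational (gx α n) := gx_irr hα n
  have h0 : gx α n ≠ 0 := h1.ne_zero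
  have : gx α n = Int.fract (if n = 0 then α else (gx α (n-1))⁻¹) := by
    cases n with
    | zero => simp [gx_zero]
    | succ m => simp [gx_succ, gaussMap]
  constructor
  · rcases lt_or_eq_of_le (Int.fract_nonneg (if n = 0 then α else (gx α (n-1))⁻¹)) with h | h
    · rw [this]; exact h
    · exact absurd (this.trans h.symm) h0
  · rw [this]; exact Int.fract_lt_one _

lemma partQuot_eq (α : ℝ) (n : ℕ) : partQuot α (n+1) = (⌊(gx α n)⁻¹⌋).toNat := rfl

lemma gx_inv_gt_one {α : ℝ} (hα : Irrational α) (n : ℕ) : 1 < (gx α n)⁻¹ := by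
  have h := gx_mem hα n
  rw [one_lt_inv_iff₀]
  exact ⟨h.1, h.2⟩

lemma floor_inv_pos {α : ℝ} (hα : Irrational α) (n : ℕ) : 1 ≤ ⌊(gx α n)⁻¹⌋ := by
  have := gx_inv_gt_one hα n
  exact Int.le_floor.mpr (by exact_mod_cast this.le)

lemma partQuot_pos {α : ℝ} (hα : Irrational α) (n : ℕ) : 1 ≤ partQuot α (n+1) := by
  rw [partQuot_eq]
  exact_mod_cast Int.toNat_le_toNat (floor_inv_pos hα n)

lemma partQuot_cast {α : ℝ} (hα : Irrational α) (n : ℕ) :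
    ((partQuot α (n+1) : ℕ) : ℝ) = (⌊(gx α n)⁻¹⌋ : ℝ) := by
  rw [partQuot_eq]
  exact_mod_cast congrArg (Int.cast : ℤ → ℝ)
    (Int.toNat_of_nonneg (by linarith [floor_inv_pos hα n]))

lemma gx_rec {α : ℝ} (hα : Irrational α) (n : ℕ) :
    gx α (n+1) = (gx α n)⁻¹ - (partQuot α (n+1) : ℝ) := by
  rw [gx_succ, gaussMap, Int.fract, partQuot_cast hα]

lemma gx_pair {α : ℝ} (hα : Irrational α) (n : ℕ) :
    gx α n * gx α (n+1) = 1 - (partQuot α (n+1) : ℝ) * gx α n := by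
  have h0 := (gx_mem hα n).1
  rw [gx_rec hα, mul_sub, mul_inv_cancel₀ h0.ne']
  ring

lemma gx_pair_le_half {α : ℝ} (hα : Irrational α) (n : ℕ) :
    gx α n * gx α (n+1) ≤ 1/2 := by
  have h0 := gx_mem hα n
  have h1 := gx_mem hα (n+1)
  have ha : (1:ℝ) ≤ (partQuot α (n+1) : ℝ) := by exact_mod_cast partQuot_pos hα n
  have key := gx_pair hα n
  rcases le_or_gt (gx α n) (1/2) with hh | hh
  · nlinarith [h1.2, h0.1]
  · nlinarith [h0.1]

/-! ### The products `β_n = x_0 ⋯ x_n` -/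

noncomputable def bprod (α : ℝ) (n : ℕ) : ℝ := ∏ i ∈ Finset.range (n+1), gx α i

lemma bprod_succ (α : ℝ) (n : ℕ) : bprod α (n+1) = bprod α n * gx α (n+1) :=
  Finset.prod_range_succ _ _

lemma bprod_pos {α : ℝ} (hα : Irrational α) (n : ℕ) : 0 < bprod α n :=
  Finset.prod_pos fun i _ => (gx_mem hα i).1

lemma bprod_le_one {α : ℝ} (hα : Irrational α) (n : ℕ) : bprod α n ≤ 1 :=
  Finset.prod_le_one (fun i _ => (gx_mem hα i).1.le) (fun i _ => (gx_mem hα i).2.le)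

lemma bprod_anti {α : ℝ} (hα : Irrational α) : Antitone (bprod α) := by
  apply antitone_nat_of_succ_le
  intro n
  rw [bprod_succ]
  nlinarith [bprod_pos hα n, (gx_mem hα (n+1)).2]

lemma bprod_two_step {α : ℝ} (hα : Irrational α) (n : ℕ) :
    bprod α (n+2) ≤ bprod α n / 2 := by
  have : bprod α (n+2) = bprod α n * (gx α (n+1) * gx α (n+2)) := by
    rw [bprod_succ, bprod_succ]; ring
  rw [this]
  have := gx_pair_le_half hα (n+1)
  nlinarith [bprod_pos hα n]

lemma bprod_pow {α : ℝ} (hα : Irrational α) (m : ℕ) : bprod α (2*m) ≤ (1/2)^m := by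
  induction m with
  | zero => simpa using bprod_le_one hα 0
  | succ m ih =>
      have : 2*(m+1) = 2*m + 2 := by ring
      rw [this]
      calc bprod α (2*m+2) ≤ bprod α (2*m) / 2 := bprod_two_step hα _
        _ ≤ (1/2)^m / 2 := by linarith
        _ = (1/2)^(m+1) := by ring

lemma bprod_small {α : ℝ} (hα : Irrational α) {η : ℝ} (hη : 0 < η) :
    ∃ K : ℕ, ∀ n ≥ K, bprod α n < η := by
  obtain ⟨m, hm⟩ := exists_pow_lt_of_lt_one hη (by norm_num : (1:ℝ)/2 < 1)
  exact ⟨2*m, fun n hn => lt_of_le_of_lt ((bprod_anti hα hn).trans (bprod_pow hα m)) hm⟩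

/-- The key identity `q_n α - p_n = (-1)^n x_0 ⋯ x_n`. -/
lemma conv_diff {α : ℝ} (hα : Irrational α) (n : ℕ) :
    (qden α n : ℝ) * α - (pnum α n : ℝ) = (-1)^n * bprod α n := by
  have key : ∀ n : ℕ, ((qden α n : ℝ) * α - (pnum α n : ℝ) = (-1)^n * bprod α n) ∧
      ((qden α (n+1) : ℝ) * α - (pnum α (n+1) : ℝ) = (-1)^(n+1) * bprod α (n+1)) := by
    intro n
    induction n with
    | zero =>
        have hb0 : bprod α 0 = Int.fract α := by
          simp [bprod, gx]
        constructor
        · show ((1:ℕ):ℝ) * α - ((⌊α⌋ : ℤ):ℝ) = (-1)^0 * bprod α 0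
          rw [hb0, Int.fract]
          push_cast
          ring
        · show ((partQuot α 1 : ℕ):ℝ) * α - ((partQuot α 1 * ⌊α⌋ + 1 : ℤ):ℝ)
            = (-1)^1 * bprod α 1
          have hb : bprod α 1 = gx α 0 * gx α 1 := by
            simp [bprod, Finset.prod_range_succ]
          have hp := gx_pair hα 0
          simp only [Nat.zero_add] at hp
          have hx0 : gx α 0 = α - (⌊α⌋:ℝ) := rfl
          rw [hb, hp, hx0]
          push_cast
          ring
    | succ n ih =>
        refine ⟨ih.2, ?_⟩
        have hq : (qden α (n+2) : ℝ)
            = (partQuot α (n+2) : ℝ) * (qden α (n+1) : ℝ) + (qden α n : ℝ) := by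
          show ((partQuot α (n + 2) * qden α (n + 1) + qden α n : ℕ) : ℝ) = _
          push_cast; ring
        have hp : (pnum α (n+2) : ℝ)
            = (partQuot α (n+2) : ℝ) * (pnum α (n+1) : ℝ) + (pnum α n : ℝ) := by
          show ((partQuot α (n + 2) * pnum α (n + 1) + pnum α n : ℤ) : ℝ) = _
          push_cast; ring
        have e1 := ih.1
        have e2 := ih.2
        have hpair := gx_pair hα (n+1)
        have hb2 : bprod α (n+2) = bprod α n * (gx α (n+1) * gx α (n+2)) := by
          rw [bprod_succ, bprod_succ]; ring
        have hb1 : bprod α (n+1) = bprod α n * gx α (n+1) := bprod_succ α n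
        rw [hq, hp, hb2, hpair]
        rw [hb1] at e2
        have : (-1:ℝ)^(n+2) = (-1)^n := by ring
        rw [this]
        have h1 : (-1:ℝ)^(n+1) = -(-1)^n := by ring
        rw [h1] at e2
        nlinarith [e1, e2]
  exact (key n).1

/-! ### Basic facts about `qden` and `sudler` -/

lemma qden_ge {α : ℝ} (hα : Irrational α) (k : ℕ) : 1 ≤ qden α k ∧ k ≤ qden α k := by
  have key : ∀ n : ℕ, (1 ≤ qden α n ∧ n ≤ qden α n) ∧
      (1 ≤ qden α (n+1) ∧ n+1 ≤ qden α (n+1)) := by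
    intro n
    induction n with
    | zero =>
        refine ⟨⟨le_refl 1, Nat.zero_le _⟩, ?_, ?_⟩ <;>
          simpa [qden] using partQuot_pos hα 0
    | succ n ih =>
        refine ⟨ih.2, ?_, ?_⟩
        · show 1 ≤ partQuot α (n+2) * qden α (n+1) + qden α n
          have := ih.1.1
          omega
        · show n+2 ≤ partQuot α (n+2) * qden α (n+1) + qden α n
          have h1 := ih.2.2
          have h2 := ih.1.1
          have h3 := partQuot_pos hα (n+1)
          nlinarith
  exact (key k).1

lemma sudler_nonneg (α : ℝ) (N : ℕ) : 0 ≤ sudler α N := by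
  unfold sudler; positivity

lemma sudler_pos {α : ℝ} (hα : Irrational α) (N : ℕ) : 0 < sudler α N := by
  apply Finset.prod_pos
  intro r hr
  have hr1 : 1 ≤ r := (Finset.mem_Icc.mp hr).1
  have : Real.sin (Real.pi * r * α) ≠ 0 := by
    intro hz
    obtain ⟨n, hn⟩ := Real.sin_eq_zero_iff.mp hz
    have : (r:ℝ) * α = (n:ℝ) := by
      have hπ := Real.pi_ne_zero
      have : Real.pi * ((r:ℝ) * α) = Real.pi * (n:ℝ) := by linarith [hn]
      exact mul_left_cancel₀ hπ this
    have hirr : Irrational ((r:ℝ) * α) := hα.natCast_mul (by omega)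
    rw [this] at hirr
    exact (Rat.not_irrational n) (by exact_mod_cast hirr)
  positivity

lemma sudler_split (α : ℝ) (N M : ℕ) :
    sudler α (N + M) = sudler α N *
      ∏ r ∈ Finset.Icc 1 M, 2 * |Real.sin (Real.pi * ((r:ℝ) * α + (N:ℝ) * α))| := by
  unfold sudler
  have h1 : ∀ K : ℕ, Finset.Icc 1 K = Finset.Ioc 0 K := by
    intro K; ext x; simp [Finset.mem_Icc, Finset.mem_Ioc]; omega
  rw [h1, h1, h1]
  rw [← Finset.prod_Ioc_consecutive _ (Nat.zero_le N) (Nat.le_add_right N M)]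
  congr 1
  rw [show Finset.Ioc N (N+M) = (Finset.Ioc 0 M).map (addLeftEmbedding N) by
    rw [Finset.map_add_left_Ioc]; simp]
  rw [Finset.prod_map]
  apply Finset.prod_congr rfl
  intro x hx
  simp only [addLeftEmbedding_apply]
  congr 2
  push_cast
  ring_nf

/-- The shifted block equals a perturbed Sudler product. -/
lemma pert_match (α : ℝ) (k : ℕ) (hq : 1 ≤ qden α k) (N : ℕ) (P : ℤ) (θ : ℝ)
    (hθ : (N:ℝ) * α = θ + (P:ℝ)) :
    (∏ r ∈ Finset.Icc 1 (qden α k), 2 * |Real.sin (Real.pi * ((r:ℝ) * α + (N:ℝ) * α))|)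
      = sudlerPert α k ((-1:ℝ)^k * (qden α k : ℝ) * θ) := by
  unfold sudlerPert
  apply Finset.prod_congr rfl
  intro r _
  congr 1
  have hqR : (qden α k : ℝ) ≠ 0 := by positivity
  have harg : (-1:ℝ)^k * ((-1:ℝ)^k * (qden α k : ℝ) * θ) / (qden α k : ℝ) = θ := by
    have : (-1:ℝ)^k * (-1:ℝ)^k = 1 := by
      rw [← mul_pow]; norm_num
    field_simp
    linear_combination θ * this
  rw [harg, hθ]
  have : Real.pi * ((r:ℝ) * α + (θ + (P:ℝ)))
      = Real.pi * ((r:ℝ) * α + θ) + (P:ℝ) * Real.pi := by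
    ring
  rw [this, Real.sin_add_int_mul_pi, abs_mul]
  have : |((-1:ℝ))^P| = 1 := by
    rcases Int.even_or_odd P with hp | hp
    · rw [hp.neg_one_zpow]; norm_num
    · rw [hp.neg_one_zpow]; norm_num
  rw [this, one_mul]

lemma pert_nonneg (α : ℝ) (k : ℕ) (ε : ℝ) : 0 ≤ sudlerPert α k ε := by
  unfold sudlerPert; positivity

lemma pert_le_sSup (α : ℝ) (k : ℕ) {δ ε : ℝ} (hε : ε ∈ Set.Ioo (-δ) δ) :
    sudlerPert α k ε ≤ sSup ((fun ε => sudlerPert α k ε) '' Set.Ioo (-δ) δ) := by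
  apply le_csSup
  · refine ⟨2^(qden α k), ?_⟩
    rintro y ⟨e, -, rfl⟩
    unfold sudlerPert
    calc (∏ r ∈ Finset.Icc 1 (qden α k),
          2 * |Real.sin (Real.pi * ((r:ℝ) * α + (-1:ℝ)^k * e / (qden α k : ℝ)))|)
        ≤ ∏ r ∈ Finset.Icc 1 (qden α k), 2 := by
          apply Finset.prod_le_prod
          · intro i _; positivity
          · intro i _
            nlinarith [abs_sin_le_one (Real.pi * ((i:ℝ) * α + (-1:ℝ)^k * e / (qden α k : ℝ))),
              abs_nonneg (Real.sin (Real.pi * ((i:ℝ) * α + (-1:ℝ)^k * e / (qden α k : ℝ))))]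
      _ ≤ 2^(qden α k) := by
          rw [Finset.prod_const]
          apply pow_le_pow_right₀ (by norm_num)
          simp [Nat.card_Icc]
  · exact ⟨ε, hε, rfl⟩

/-- If `α` is badly approximable and for some `δ > 0`, `0 < c < 1` and infinitely many `k`
the sup of the perturbed Sudler product `P_{q_k}(α, ·)` over `(-δ, δ)` is `< c`,
then `liminf P_N(α) = 0`. -/
theorem liminf_sudler_eq_zero_of_pert_small (α : ℝ) (hα : Irrational α)
    (B : ℕ) (hB : ∀ n : ℕ, 1 ≤ n → partQuot α n ≤ B)
    (δ c : ℝ) (hδ : 0 < δ) (hc0 : 0 < c) (hc1 : c < 1)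
    (h : ∀ K : ℕ, ∃ k : ℕ, K ≤ k ∧
      sSup ((fun ε => sudlerPert α k ε) '' Set.Ioo (-δ) δ) < c) :
    Filter.liminf (fun N : ℕ => sudler α N) Filter.atTop = 0 := by
  -- the `qden` part of `sudler` at a `qden` index matches a zero perturbation
  have sudler_qden : ∀ k : ℕ, sudler α (qden α k) = sudlerPert α k 0 := by
    intro k
    unfold sudler sudlerPert
    apply Finset.prod_congr rfl
    intro r _
    congr 2
    ring
  -- main construction
  have claim : ∀ m K : ℕ, ∀ γ : ℝ, 0 < γ →
      ∃ N : ℕ, ∃ P : ℤ, K ≤ N ∧ |(N:ℝ) * α - (P:ℝ)| < γ ∧ sudler α N < c^(m+1) := by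
    intro m
    induction m with
    | zero =>
        intro K γ hγ
        obtain ⟨K₁, hK₁⟩ := bprod_small hα hγ
        obtain ⟨k, hk, hs⟩ := h (max K K₁)
        refine ⟨qden α k, pnum α k, ?_, ?_, ?_⟩
        · exact le_trans (le_trans (le_max_left _ _) hk) (qden_ge hα k).2
        · rw [conv_diff hα k, abs_mul, abs_pow, abs_neg, abs_one, one_pow, one_mul,
            abs_of_pos (bprod_pos hα k)]
          exact hK₁ k (le_trans (le_max_right _ _) hk)
        · rw [pow_one, sudler_qden k]
          exact lt_of_le_of_lt (pert_le_sSup α k ⟨by linarith, hδ⟩) hs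
    | succ m ih =>
        intro K γ hγ
        obtain ⟨K₁, hK₁⟩ := bprod_small hα (by linarith : (0:ℝ) < γ/2)
        obtain ⟨k, hk, hs⟩ := h (max K K₁)
        have hq1 : 1 ≤ qden α k := (qden_ge hα k).1
        have hqR : (0:ℝ) < (qden α k : ℝ) := by exact_mod_cast hq1
        set γ' := min (δ / (qden α k : ℝ)) (γ/2) with hγ'def
        have hγ' : 0 < γ' := lt_min (by positivity) (by linarith)
        obtain ⟨N₀, P₀, -, hθ₀, hs₀⟩ := ih 0 γ' hγ'
        set θ₀ := (N₀:ℝ) * α - (P₀:ℝ) with hθ₀def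
        refine ⟨N₀ + qden α k, P₀ + pnum α k, ?_, ?_, ?_⟩
        · calc K ≤ k := le_trans (le_max_left _ _) hk
            _ ≤ qden α k := (qden_ge hα k).2
            _ ≤ N₀ + qden α k := Nat.le_add_left _ _
        · have hd := conv_diff hα k
          have : ((N₀ + qden α k : ℕ):ℝ) * α - ((P₀ + pnum α k : ℤ):ℝ)
              = θ₀ + ((qden α k : ℝ) * α - (pnum α k : ℝ)) := by
            push_cast; ring
          rw [this, hd]
          have hb : bprod α k < γ/2 := hK₁ k (le_trans (le_max_right _ _) hk)
          have hb0 : 0 < bprod α k := bprod_pos hα k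
          have h2 : |(-1:ℝ)^k * bprod α k| = bprod α k := by
            rw [abs_mul, abs_pow, abs_neg, abs_one, one_pow, one_mul, abs_of_pos hb0]
          calc |θ₀ + (-1:ℝ)^k * bprod α k| ≤ |θ₀| + |(-1:ℝ)^k * bprod α k| := abs_add_le _ _
            _ < γ/2 + γ/2 := by
                rw [h2]
                have : |θ₀| < γ/2 := lt_of_lt_of_le hθ₀ (min_le_right _ _)
                linarith
            _ = γ := by ring
        · rw [sudler_split α N₀ (qden α k)]
          have hmatch := pert_match α k hq1 N₀ P₀ θ₀ (by rw [hθ₀def]; ring)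
          rw [hmatch]
          set ε := (-1:ℝ)^k * (qden α k : ℝ) * θ₀ with hεdef
          have hεmem : ε ∈ Set.Ioo (-δ) δ := by
            have habs : |ε| < δ := by
              rw [hεdef, abs_mul, abs_mul, abs_pow, abs_neg, abs_one, one_pow, one_mul,
                abs_of_pos hqR]
              have h1 : |θ₀| < δ / (qden α k : ℝ) := lt_of_lt_of_le hθ₀ (min_le_left _ _)
              calc (qden α k : ℝ) * |θ₀| < (qden α k : ℝ) * (δ / (qden α k : ℝ)) := by
                    exact (mul_lt_mul_iff_right₀ hqR).mpr h1
                _ = δ := by field_simp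
            exact abs_lt.mp habs |>.imp (fun h => h) (fun h => h) |> fun hh => ⟨hh.1, hh.2⟩
          have hT : sudlerPert α k ε < c :=
            lt_of_le_of_lt (pert_le_sSup α k hεmem) hs
          have : sudler α N₀ * sudlerPert α k ε < c^(m+1) * c :=
            mul_lt_mul'' hs₀ hT (sudler_nonneg α N₀) (pert_nonneg α k ε)
          calc sudler α N₀ * sudlerPert α k ε < c^(m+1) * c := this
            _ = c^(m+2) := by ring
  -- conclude
  set f : ℕ → ℝ := fun N => sudler α N with hfdef
  have hbdd : IsBoundedUnder (· ≥ ·) atTop f :=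
    Filter.isBoundedUnder_of ⟨0, fun N => sudler_nonneg α N⟩
  have hfreq : ∀ m : ℕ, ∃ᶠ N in atTop, f N ≤ c^(m+1) := by
    intro m
    rw [Filter.frequently_atTop]
    intro K
    obtain ⟨N, P, hN, -, hs⟩ := claim m K 1 one_pos
    exact ⟨N, hN, hs.le⟩
  have hle : ∀ m : ℕ, Filter.liminf f atTop ≤ c^(m+1) := fun m =>
    Filter.liminf_le_of_frequently_le (hfreq m) hbdd
  have hge : (0:ℝ) ≤ Filter.liminf f atTop := by
    apply Filter.le_liminf_of_le
    · exact Filter.IsCoboundedUnder.of_frequently_le (hfreq 0)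
    · exact Filter.Eventually.of_forall fun (N : ℕ) => sudler_nonneg α N
  have hle0 : Filter.liminf f atTop ≤ 0 := by
    by_contra hcon
    push_neg at hcon
    obtain ⟨m, hm⟩ := exists_pow_lt_of_lt_one hcon hc1
    have : c^(m+1) ≤ c^m := pow_le_pow_of_le_one hc0.le hc1.le (Nat.le_succ m)
    linarith [hle m]
  linarith [hge, hle0]
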